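/- For every ε > 0 there exists t₀ such that for all real t ≥ t₀ and every positive integer c, the number of positive integers d ≤ t with rad(φ(d)) = c is at most t · L(t)^{-(1-ε)}, where L(t) = exp(log t · (log log log t)/(log log t)); the bound is uniform in c. -/

import Mathlib

open Finset

/-- The radical of a natural number: the product of its distinct prime divisors. -/
def rad (n : ℕ) : ℕ := ∏ p ∈ n.primeFactors, p

/-- `L t = exp(log t · (log log log t)/(log log t))`. -/
noncomputable def L (t : ℝ) : ℝ :=
  Real.exp (Real.log t * (Real.log (Real.log (Real.log t)) / Real.log (Real.log t)))

namespace RadFiber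

open Real

lemma geom_le' {r : ℝ} (h0 : 0 ≤ r) (h1 : r < 1) (n : ℕ) :
    ∑ i ∈ range n, r ^ i ≤ (1 - r)⁻¹ := by
  have h := hasSum_geometric_of_lt_one h0 h1
  calc ∑ i ∈ range n, r ^ i ≤ ∑' i : ℕ, r ^ i :=
        h.summable.sum_le_tsum _ (fun i _ => pow_nonneg h0 i)
    _ = (1 - r)⁻¹ := h.tsum_eq

lemma key1 (N : ℕ) {σ : ℝ} (hσ : 0 < σ) :
    ∀ P : Finset ℕ, (∀ p ∈ P, p.Prime) →
    ∑ m ∈ (Icc 1 N).filter (fun m => m.primeFactors ⊆ P), ((m : ℝ)) ^ (-σ)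
      ≤ ∏ p ∈ P, (1 - (p : ℝ) ^ (-σ))⁻¹ := by
  intro P
  induction P using Finset.induction_on with
  | empty =>
    intro _
    rw [Finset.prod_empty]
    calc ∑ m ∈ (Icc 1 N).filter (fun m => m.primeFactors ⊆ (∅ : Finset ℕ)), ((m : ℝ)) ^ (-σ)
        ≤ ∑ m ∈ ({1} : Finset ℕ), ((m : ℝ)) ^ (-σ) := by
          refine Finset.sum_le_sum_of_subset_of_nonneg (fun m hm => ?_)
            (fun m _ _ => Real.rpow_nonneg (Nat.cast_nonneg m) _)
          simp only [mem_filter, mem_Icc] at hm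
          obtain ⟨⟨h1m, _⟩, hpf⟩ := hm
          have : m.primeFactors = ∅ := Finset.subset_empty.mp hpf
          rcases Nat.primeFactors_eq_empty.mp this with h | h
          · omega
          · exact Finset.mem_singleton.mpr h
      _ = 1 := by simp
  | @insert p P hpP ih =>
    intro hprime
    have hp : p.Prime := hprime p (Finset.mem_insert_self p P)
    have hP : ∀ q ∈ P, q.Prime := fun q hq => hprime q (Finset.mem_insert_of_mem hq)
    have hp1 : (1 : ℝ) < (p : ℝ) := by exact_mod_cast hp.one_lt
    have hr0 : (0 : ℝ) ≤ (p : ℝ) ^ (-σ) := Real.rpow_nonneg (by positivity) _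
    have hr1 : (p : ℝ) ^ (-σ) < 1 :=
      Real.rpow_lt_one_of_one_lt_of_neg hp1 (by linarith)
    set T' := (Icc 1 N).filter (fun m => m.primeFactors ⊆ insert p P) with hT'
    set T := (Icc 1 N).filter (fun m => m.primeFactors ⊆ P) with hT
    set F : ℕ → ℕ × ℕ := fun m => (m.factorization p, m / p ^ (m.factorization p)) with hF
    set g : ℕ × ℕ → ℝ := fun y => ((p : ℝ) ^ (-σ)) ^ y.1 * ((y.2 : ℝ)) ^ (-σ) with hg
    have hrecon : ∀ m ∈ T', p ^ (F m).1 * (F m).2 = m := by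
      intro m _
      exact Nat.ordProj_mul_ordCompl_eq_self m p
    have hgF : ∀ m ∈ T', ((m : ℝ)) ^ (-σ) = g (F m) := by
      intro m hm
      have h := hrecon m hm
      have hp0 : (0 : ℝ) ≤ (p : ℝ) := by positivity
      have hcast : (m : ℝ) = ((p : ℝ) ^ ((F m).1 : ℕ)) * (((F m).2 : ℕ) : ℝ) := by
        have h2 : ((p ^ (F m).1 * (F m).2 : ℕ) : ℝ) = (m : ℝ) := by exact_mod_cast congrArg (fun n : ℕ => (n : ℝ)) h
        rw [← h2]; push_cast; ring
      rw [hcast, Real.mul_rpow (by positivity) (Nat.cast_nonneg _)]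
      congr 1
      rw [← Real.rpow_natCast (p : ℝ) (F m).1, ← Real.rpow_natCast ((p : ℝ) ^ (-σ)) (F m).1,
        ← Real.rpow_mul hp0, ← Real.rpow_mul hp0, mul_comm]
    have hmem : ∀ m ∈ T', F m ∈ (range (N + 1)) ×ˢ T := by
      intro m hm
      have hmm := hm
      simp only [hT', mem_filter, mem_Icc] at hmm
      obtain ⟨⟨h1m, hmN⟩, hpf⟩ := hmm
      have hm0 : m ≠ 0 := by omega
      refine Finset.mem_product.mpr ⟨?_, ?_⟩
      · -- factorization exponent small
        have hdvd : p ^ (m.factorization p) ∣ m := Nat.ordProj_dvd m p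
        have hle : p ^ (m.factorization p) ≤ m := Nat.le_of_dvd (by omega) hdvd
        have h2 : 2 ^ (m.factorization p) ≤ p ^ (m.factorization p) :=
          Nat.pow_le_pow_left hp.two_le _
        have h3 : m.factorization p < 2 ^ (m.factorization p) := Nat.lt_two_pow_self
        simp only [Finset.mem_range]
        show m.factorization p < N + 1
        omega
      · have hdvd : m / p ^ (m.factorization p) ∣ m := Nat.ordCompl_dvd m p
        have hpos : 0 < m / p ^ (m.factorization p) := Nat.ordCompl_pos p hm0
        have hle : m / p ^ (m.factorization p) ≤ m := Nat.le_of_dvd (by omega) hdvd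
        simp only [hT, hF, mem_filter, mem_Icc]
        refine ⟨⟨by omega, by omega⟩, ?_⟩
        intro q hq
        have hq' : q ∈ m.primeFactors :=
          Nat.primeFactors_mono hdvd hm0 hq
        have hqd : q ∣ m / p ^ m.factorization p := Nat.dvd_of_mem_primeFactors hq
        have hqp : q ≠ p := by
          intro hqe
          subst hqe
          exact Nat.not_dvd_ordCompl hp hm0 hqd
        rcases Finset.mem_insert.mp (hpf hq') with h | h
        · exact absurd h hqp
        · exact h
    have hinj : Set.InjOn F T' := by
      intro a ha b hb hab
      have h1 := hrecon a ha
      have h2 := hrecon b hb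
      rw [← h1, ← h2, hab]
    calc ∑ m ∈ T', ((m : ℝ)) ^ (-σ) = ∑ m ∈ T', g (F m) := Finset.sum_congr rfl hgF
      _ = ∑ y ∈ T'.image F, g y := (Finset.sum_image (fun a ha b hb h => hinj ha hb h)).symm
      _ ≤ ∑ y ∈ (range (N + 1)) ×ˢ T, g y := by
          refine Finset.sum_le_sum_of_subset_of_nonneg ?_ (fun y _ _ => ?_)
          · intro y hy
            obtain ⟨m, hm, rfl⟩ := Finset.mem_image.mp hy
            exact hmem m hm
          · exact mul_nonneg (pow_nonneg hr0 _) (Real.rpow_nonneg (Nat.cast_nonneg _) _)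
      _ = (∑ a ∈ range (N + 1), ((p : ℝ) ^ (-σ)) ^ a) * (∑ m ∈ T, ((m : ℝ)) ^ (-σ)) := by
          rw [Finset.sum_product]
          rw [Finset.sum_mul]
          refine Finset.sum_congr rfl (fun a _ => ?_)
          rw [Finset.mul_sum]
      _ ≤ (1 - (p : ℝ) ^ (-σ))⁻¹ * ∏ q ∈ P, (1 - (q : ℝ) ^ (-σ))⁻¹ := by
          refine mul_le_mul (geom_le' hr0 hr1 _) (ih hP) ?_ ?_
          · exact Finset.sum_nonneg (fun m _ => Real.rpow_nonneg (Nat.cast_nonneg _) _)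
          · rw [inv_nonneg]; linarith
      _ = ∏ q ∈ insert p P, (1 - (q : ℝ) ^ (-σ))⁻¹ := by rw [Finset.prod_insert hpP]

lemma rpow_anti {a b σ : ℝ} (ha : 0 < a) (hab : a ≤ b) (hσ : 0 ≤ σ) :
    b ^ (-σ) ≤ a ^ (-σ) := by
  rw [Real.rpow_neg ha.le, Real.rpow_neg (ha.trans_le hab).le]
  have h1 : 0 < a ^ σ := Real.rpow_pos_of_pos ha σ
  have h2 : a ^ σ ≤ b ^ σ := Real.rpow_le_rpow ha.le hab hσ
  exact inv_anti₀ h1 h2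

lemma inv_one_sub_le_exp {y : ℝ} (h0 : 0 ≤ y) (h1 : y ≤ 0.71) :
    (1 - y)⁻¹ ≤ Real.exp (3.5 * y) := by
  have h2 : (1 - y)⁻¹ ≤ 1 + 3.5 * y := by
    rw [inv_le_iff_one_le_mul₀ (by linarith)]
    nlinarith
  calc (1 - y)⁻¹ ≤ 1 + 3.5 * y := h2
    _ ≤ Real.exp (3.5 * y) := by linarith [Real.add_one_le_exp (3.5 * y)]

lemma prime_rpow_small {p : ℕ} (hp : p.Prime) {σ : ℝ} (hσl : 1/2 ≤ σ) :
    ((p : ℝ)) ^ (-σ) ≤ 0.71 := by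
  have h2 : (2 : ℝ) ≤ (p : ℝ) := by exact_mod_cast hp.two_le
  have ha : ((p : ℝ)) ^ (-σ) ≤ (2 : ℝ) ^ (-σ) := rpow_anti two_pos h2 (by linarith)
  have hb : (2 : ℝ) ^ (-σ) ≤ (2 : ℝ) ^ (-(1/2 : ℝ)) :=
    Real.rpow_le_rpow_of_exponent_le one_le_two (by linarith)
  have hc : (2 : ℝ) ^ (-(1/2 : ℝ)) = (Real.sqrt 2)⁻¹ := by
    rw [Real.rpow_neg (by norm_num), Real.sqrt_eq_rpow]
  have hs : (1.409 : ℝ) ≤ Real.sqrt 2 := by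
    nlinarith [Real.sq_sqrt (by norm_num : (0:ℝ) ≤ 2), Real.sqrt_nonneg 2]
  have hd : (Real.sqrt 2)⁻¹ ≤ 0.71 := by
    rw [inv_le_iff_one_le_mul₀ (by linarith)]
    nlinarith
  linarith [ha, hb, hc ▸ hd]

lemma prod_le_exp_sum (P : Finset ℕ) (hP : ∀ p ∈ P, p.Prime) {σ : ℝ} (hσl : 1/2 ≤ σ) :
    ∏ p ∈ P, (1 - (p : ℝ) ^ (-σ))⁻¹ ≤ Real.exp (3.5 * ∑ p ∈ P, (p : ℝ) ^ (-σ)) := by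
  rw [Finset.mul_sum, Real.exp_sum]
  refine Finset.prod_le_prod (fun p hp => ?_) (fun p hp => ?_)
  · rw [inv_nonneg]
    have := prime_rpow_small (hP p hp) hσl
    linarith
  · exact inv_one_sub_le_exp (Real.rpow_nonneg (Nat.cast_nonneg _) _)
      (prime_rpow_small (hP p hp) hσl)

lemma block_card (j : ℕ) :
    j * ((Finset.Ioc (2^j) (2^(j+1))).filter Nat.Prime).card ≤ 2^(j+2) := by
  set B := (Finset.Ioc (2^j) (2^(j+1))).filter Nat.Prime with hB
  have hsub : B ⊆ (Finset.range (2^(j+1) + 1)).filter Nat.Prime := by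
    intro p hp
    simp only [hB, mem_filter, Finset.mem_Ioc, Finset.mem_range] at hp ⊢
    exact ⟨by omega, hp.2⟩
  have h1 : ∏ p ∈ B, p ∣ primorial (2^(j+1)) :=
    Finset.prod_dvd_prod_of_subset _ _ _ hsub
  have h2 : ∏ p ∈ B, p ≤ 4 ^ (2^(j+1)) :=
    le_trans (Nat.le_of_dvd (primorial_pos _) h1) (primorial_le_4_pow _)
  have h3 : (2^j) ^ B.card ≤ ∏ p ∈ B, p := by
    rw [← Finset.prod_const]
    refine Finset.prod_le_prod' (fun p hp => ?_)
    simp only [hB, mem_filter, Finset.mem_Ioc] at hp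
    omega
  have h4 : (2:ℕ) ^ (j * B.card) ≤ 2 ^ (2^(j+2)) := by
    calc (2:ℕ) ^ (j * B.card) = (2^j) ^ B.card := by rw [pow_mul]
      _ ≤ 4 ^ (2^(j+1)) := le_trans h3 h2
      _ = 2 ^ (2^(j+2)) := by
          rw [(by norm_num : (4:ℕ) = 2^2), ← pow_mul, pow_succ]
          ring_nf
  exact (Nat.pow_le_pow_iff_right (by norm_num)).mp h4

def pB (j : ℕ) : Finset ℕ := (Finset.Ioc (2^j) (2^(j+1))).filter Nat.Prime

lemma prime_sum_le (J : ℕ) (hJ : 2 ≤ J) {σ : ℝ} (hσl : 1/2 ≤ σ) (hσu : σ ≤ 1) :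
    ∑ p ∈ (Icc 2 (2^J)).filter Nat.Prime, ((p : ℝ)) ^ (-σ)
      ≤ 1 + 4 * (2:ℝ) ^ ((J:ℝ) * (1-σ)) * (1 + Real.log J) := by
  have h2J : (0:ℝ) < 2 ^ ((J:ℝ) * (1-σ)) := Real.rpow_pos_of_pos two_pos _
  have hnn : ∀ m : ℕ, 0 ≤ ((m:ℝ)) ^ (-σ) := fun m => Real.rpow_nonneg (Nat.cast_nonneg m) _
  -- subset step
  have hsub : (Icc 2 (2^J)).filter Nat.Prime ⊆ insert 2 ((Finset.Ico 1 J).biUnion pB) := by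
    intro p hp
    simp only [mem_filter, mem_Icc] at hp
    obtain ⟨⟨h2p, hpJ⟩, hpp⟩ := hp
    rcases eq_or_lt_of_le h2p with h | h
    · exact Finset.mem_insert.mpr (Or.inl h.symm)
    · refine Finset.mem_insert.mpr (Or.inr ?_)
      have hp1 : p - 1 ≠ 0 := by omega
      set j := Nat.log 2 (p-1) with hj
      have hl : 2 ^ j ≤ p - 1 := Nat.pow_log_le_self 2 hp1
      have hu : p - 1 < 2 ^ (j+1) := Nat.lt_pow_succ_log_self (by norm_num) _
      have hj1 : 1 ≤ j := by
        by_contra hc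
        interval_cases j <;> omega
      have hjJ : j < J := by
        have : (2:ℕ) ^ j < 2 ^ J := by omega
        exact (Nat.pow_lt_pow_iff_right (by norm_num)).mp this
      refine Finset.mem_biUnion.mpr ⟨j, Finset.mem_Ico.mpr ⟨hj1, hjJ⟩, ?_⟩
      simp only [pB, mem_filter, Finset.mem_Ioc]
      exact ⟨⟨by omega, by omega⟩, hpp⟩
  have h2nB : 2 ∉ (Finset.Ico 1 J).biUnion pB := by
    intro h
    obtain ⟨j, hj, hmem⟩ := Finset.mem_biUnion.mp h
    simp only [pB, mem_filter, Finset.mem_Ioc] at hmem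
    have hj1 : 1 ≤ j := (Finset.mem_Ico.mp hj).1
    have : (2:ℕ) ≤ 2 ^ j := Nat.le_self_pow (by omega) 2 |>.trans (le_refl _)
    have h2j : (2:ℕ) ≤ 2^j := by
      calc (2:ℕ) = 2^1 := by norm_num
        _ ≤ 2^j := Nat.pow_le_pow_right (by norm_num) hj1
    omega
  have hdisj : (↑(Finset.Ico 1 J) : Set ℕ).PairwiseDisjoint pB := by
    intro i _ j _ hij
    have key : ∀ a b : ℕ, a < b → Disjoint (pB a) (pB b) := by
      intro a b hab
      rw [Finset.disjoint_left]
      intro p hpa hpb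
      simp only [pB, mem_filter, Finset.mem_Ioc] at hpa hpb
      have : (2:ℕ)^(a+1) ≤ 2^b := Nat.pow_le_pow_right (by norm_num) (by omega)
      omega
    rcases lt_or_gt_of_ne hij with h | h
    · exact key _ _ h
    · exact (key _ _ h).symm
  calc ∑ p ∈ (Icc 2 (2^J)).filter Nat.Prime, ((p : ℝ)) ^ (-σ)
      ≤ ∑ p ∈ insert 2 ((Finset.Ico 1 J).biUnion pB), ((p : ℝ)) ^ (-σ) :=
        Finset.sum_le_sum_of_subset_of_nonneg hsub (fun m _ _ => hnn m)
    _ = ((2:ℕ):ℝ) ^ (-σ) + ∑ p ∈ (Finset.Ico 1 J).biUnion pB, ((p : ℝ)) ^ (-σ) := by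
        rw [Finset.sum_insert h2nB]
    _ = ((2:ℕ):ℝ) ^ (-σ) + ∑ j ∈ Finset.Ico 1 J, ∑ p ∈ pB j, ((p : ℝ)) ^ (-σ) := by
        rw [Finset.sum_biUnion hdisj]
    _ ≤ 1 + ∑ j ∈ Finset.Ico 1 J, (4 / (j:ℝ)) * (2:ℝ) ^ ((J:ℝ) * (1-σ)) := by
        refine add_le_add ?_ (Finset.sum_le_sum (fun j hj => ?_))
        · have : ((2:ℕ):ℝ) ^ (-σ) ≤ ((2:ℕ):ℝ) ^ (0:ℝ) :=
            Real.rpow_le_rpow_of_exponent_le (by norm_num) (by linarith)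
          simpa using this
        · have hj1 : 1 ≤ j := (Finset.mem_Ico.mp hj).1
          have hjJ : j < J := (Finset.mem_Ico.mp hj).2
          have hjR : (0:ℝ) < (j:ℝ) := by exact_mod_cast hj1
          -- pointwise bound within block
          have hpt : ∀ p ∈ pB j, ((p : ℝ)) ^ (-σ) ≤ (((2:ℝ)^(j:ℕ))) ^ (-σ) := by
            intro p hp
            simp only [pB, mem_filter, Finset.mem_Ioc] at hp
            refine rpow_anti (by positivity) ?_ (by linarith)
            have : (2:ℕ)^j ≤ p := by omega
            exact_mod_cast this
          have hsum : ∑ p ∈ pB j, ((p : ℝ)) ^ (-σ)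
              ≤ ((pB j).card : ℝ) * (((2:ℝ)^(j:ℕ))) ^ (-σ) := by
            have := Finset.sum_le_card_nsmul (pB j) _ _ hpt
            simpa [nsmul_eq_mul] using this
          have hcard : ((pB j).card : ℝ) ≤ (2:ℝ)^(j+2:ℕ) / (j:ℝ) := by
            rw [le_div_iff₀ hjR]
            have := block_card j
            have hc : ((j * ((Finset.Ioc (2^j) (2^(j+1))).filter Nat.Prime).card : ℕ) : ℝ)
                ≤ ((2^(j+2) : ℕ) : ℝ) := Nat.cast_le.mpr this
            push_cast at hc
            rw [mul_comm] at hc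
            exact_mod_cast hc
          have hfin : ((pB j).card : ℝ) * (((2:ℝ)^(j:ℕ))) ^ (-σ)
              ≤ (4 / (j:ℝ)) * (2:ℝ) ^ ((j:ℝ) * (1-σ)) := by
            have hpos : (0:ℝ) ≤ (((2:ℝ)^(j:ℕ))) ^ (-σ) := Real.rpow_nonneg (by positivity) _
            have step1 : ((pB j).card : ℝ) * (((2:ℝ)^(j:ℕ))) ^ (-σ)
                ≤ ((2:ℝ)^(j+2:ℕ) / (j:ℝ)) * (((2:ℝ)^(j:ℕ))) ^ (-σ) :=
              mul_le_mul_of_nonneg_right hcard hpos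
            refine le_trans step1 (le_of_eq ?_)
            rw [← Real.rpow_natCast (2:ℝ) j, ← Real.rpow_mul (by norm_num : (0:ℝ) ≤ 2),
              ← Real.rpow_natCast (2:ℝ) (j+2)]
            rw [div_mul_eq_mul_div, ← Real.rpow_add (by norm_num : (0:ℝ) < 2)]
            rw [show (((j:ℕ)+2:ℕ):ℝ) + (j:ℝ) * (-σ) = 2 + (j:ℝ)*(1-σ) by push_cast; ring,
              Real.rpow_add (by norm_num : (0:ℝ) < 2)]
            rw [show ((2:ℝ)^(2:ℝ)) = 4 by
              rw [show (2:ℝ) = ((2:ℕ):ℝ) by norm_num, Real.rpow_natCast]; norm_num]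
            ring
          have hmono : (2:ℝ) ^ ((j:ℝ) * (1-σ)) ≤ (2:ℝ) ^ ((J:ℝ) * (1-σ)) := by
            refine Real.rpow_le_rpow_of_exponent_le one_le_two ?_
            have : (j:ℝ) ≤ (J:ℝ) := by exact_mod_cast hjJ.le
            nlinarith
          calc ∑ p ∈ pB j, ((p : ℝ)) ^ (-σ) ≤ ((pB j).card : ℝ) * (((2:ℝ)^(j:ℕ))) ^ (-σ) := hsum
            _ ≤ (4 / (j:ℝ)) * (2:ℝ) ^ ((j:ℝ) * (1-σ)) := hfin
            _ ≤ (4 / (j:ℝ)) * (2:ℝ) ^ ((J:ℝ) * (1-σ)) := by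
                refine mul_le_mul_of_nonneg_left hmono (by positivity)
    _ ≤ 1 + 4 * (2:ℝ) ^ ((J:ℝ) * (1-σ)) * (1 + Real.log J) := by
        refine add_le_add_right ?_ 1
        have hIco : Finset.Ico 1 J = Finset.Icc 1 (J-1) := by
          rw [← Finset.Ico_add_one_right_eq_Icc]
          congr 1
          omega
        have hharm : ∑ j ∈ Finset.Ico 1 J, 1/(j:ℝ) ≤ 1 + Real.log J := by
          rw [hIco]
          have hh : ∑ j ∈ Finset.Icc 1 (J-1), 1/(j:ℝ) = ((harmonic (J-1) : ℚ) : ℝ) := by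
            rw [harmonic_eq_sum_Icc]
            push_cast
            exact Finset.sum_congr rfl (fun j _ => (one_div _))
          rw [hh]
          refine le_trans (harmonic_le_one_add_log (J-1)) ?_
          have hlog : Real.log ((J-1:ℕ):ℝ) ≤ Real.log (J:ℝ) := by
            have h1 : (0:ℝ) < ((J-1:ℕ):ℝ) := by
              have : 1 ≤ J - 1 := by omega
              exact_mod_cast Nat.lt_of_lt_of_le Nat.zero_lt_one this
            have h2 : ((J-1:ℕ):ℝ) ≤ (J:ℝ) := by exact_mod_cast Nat.sub_le J 1
            exact Real.log_le_log h1 h2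
          linarith
        calc ∑ j ∈ Finset.Ico 1 J, (4 / (j:ℝ)) * (2:ℝ) ^ ((J:ℝ) * (1-σ))
            = 4 * (2:ℝ) ^ ((J:ℝ) * (1-σ)) * ∑ j ∈ Finset.Ico 1 J, 1/(j:ℝ) := by
              rw [Finset.mul_sum]
              exact Finset.sum_congr rfl (fun j _ => by ring)
          _ ≤ 4 * (2:ℝ) ^ ((J:ℝ) * (1-σ)) * (1 + Real.log J) := by
              refine mul_le_mul_of_nonneg_left hharm (by positivity)

set_option maxHeartbeats 1000000 in
lemma sum_S_le (S : Finset ℕ) (hS : ∀ p ∈ S, p.Prime) (x ε σ : ℝ)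
    (hx : 3 ≤ x) (hε : 0 < ε) (hε1 : ε ≤ 1)
    (hσdef : σ = 1 - (1 - ε/2) * Real.log x / x)
    (hσl : 1/2 ≤ σ)
    (hk : (S.card : ℝ) * Real.log 2 ≤ Real.exp x)
    (HB : (1 - ε/2) * (Real.log x / x) * (x + 3*Real.log x + 2*Real.log 2)
        ≤ (1 - ε/2) * Real.log x + 1)
    (HC : (x + 3*Real.log x)/Real.log 2 + 2 ≤ 2*x)
    (HD : 3 + 4 * Real.exp 1 * x ^ (1 - ε/2) * (2 + Real.log x) ≤ 0.2*x) :
    ∑ p ∈ S, ((p:ℝ)) ^ (-σ) ≤ 0.2 * x := by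
  have hx0 : (0:ℝ) < x := by linarith
  have hlx : (0:ℝ) < Real.log x := by
    have := Real.log_lt_log two_pos (by linarith : (2:ℝ) < x)
    have h2 := Real.log_two_gt_d9
    linarith
  have hl2 : (0.6931471803 : ℝ) < Real.log 2 := Real.log_two_gt_d9
  have hl2' : Real.log 2 ≤ 1 := by
    have := Real.log_le_sub_one_of_pos (two_pos (α := ℝ))
    linarith
  have hεh : (0:ℝ) ≤ 1 - ε/2 := by linarith
  have hσu : σ ≤ 1 := by
    rw [hσdef]
    have : 0 ≤ (1 - ε/2) * Real.log x / x := by positivity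
    linarith
  have h1σ : 1 - σ = (1 - ε/2) * Real.log x / x := by rw [hσdef]; ring
  have h1σ0 : 0 ≤ 1 - σ := by rw [h1σ]; positivity
  -- J
  set W : ℝ := (x + 3*Real.log x)/Real.log 2 with hW
  have hW0 : (0:ℝ) ≤ W := by positivity
  have hW1 : (1:ℝ) ≤ W := by
    rw [hW, le_div_iff₀ (by linarith)]
    linarith
  set J : ℕ := ⌈W⌉₊ + 1 with hJdef
  have hJl : W ≤ (J:ℝ) := by
    rw [hJdef]
    push_cast
    linarith [Nat.le_ceil W]
  have hJu : (J:ℝ) ≤ W + 2 := by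
    rw [hJdef]
    push_cast
    linarith [Nat.ceil_lt_add_one hW0]
  have hJ2 : 2 ≤ J := by
    have : 1 ≤ ⌈W⌉₊ := by
      rw [Nat.one_le_ceil_iff]
      linarith
    omega
  have hWl2 : W * Real.log 2 = x + 3*Real.log x := by
    rw [hW, div_mul_cancel₀]
    linarith
  have h2Jcast : ((2^J : ℕ) : ℝ) = (2:ℝ) ^ (J:ℝ) := by
    rw [Nat.cast_pow, Nat.cast_ofNat, Real.rpow_natCast]
  have h2Jlb : Real.exp (x + 3*Real.log x) ≤ (2:ℝ) ^ (J:ℝ) := by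
    rw [show (2:ℝ) ^ (J:ℝ) = Real.exp (Real.log 2 * (J:ℝ)) by
      rw [Real.exp_mul, Real.exp_log two_pos]]
    apply Real.exp_le_exp.mpr
    calc x + 3*Real.log x = W * Real.log 2 := hWl2.symm
      _ ≤ (J:ℝ) * Real.log 2 := by nlinarith
      _ = Real.log 2 * (J:ℝ) := mul_comm _ _
  -- split
  rw [← Finset.sum_filter_add_sum_filter_not S (fun p => p ≤ 2^J)]
  have hpart1 : ∑ p ∈ S.filter (fun p => p ≤ 2^J), ((p:ℝ)) ^ (-σ)
      ≤ 1 + 4 * Real.exp 1 * x ^ (1 - ε/2) * (2 + Real.log x) := by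
    have hsub : S.filter (fun p => p ≤ 2^J) ⊆ (Icc 2 (2^J)).filter Nat.Prime := by
      intro p hp
      simp only [mem_filter, mem_Icc] at hp ⊢
      exact ⟨⟨(hS p hp.1).two_le, hp.2⟩, hS p hp.1⟩
    refine le_trans (Finset.sum_le_sum_of_subset_of_nonneg hsub
      (fun m _ _ => Real.rpow_nonneg (Nat.cast_nonneg m) _)) ?_
    refine le_trans (prime_sum_le J hJ2 hσl hσu) ?_
    have hJc : (2:ℝ) ^ ((J:ℝ) * (1-σ)) ≤ Real.exp 1 * x ^ (1 - ε/2) := by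
      rw [show (2:ℝ) ^ ((J:ℝ)*(1-σ)) = Real.exp (Real.log 2 * ((J:ℝ)*(1-σ))) by
        rw [Real.exp_mul, Real.exp_log two_pos]]
      rw [show Real.exp 1 * x ^ (1 - ε/2) = Real.exp (1 + (1-ε/2)*Real.log x) by
        rw [Real.exp_add]
        congr 1
        rw [Real.rpow_def_of_pos hx0]
        ring_nf]
      apply Real.exp_le_exp.mpr
      have step : Real.log 2 * ((J:ℝ)*(1-σ)) ≤ (x + 3*Real.log x + 2*Real.log 2) * (1-σ) := by
        have h1 : Real.log 2 * (J:ℝ) ≤ x + 3*Real.log x + 2*Real.log 2 := by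
          calc Real.log 2 * (J:ℝ) ≤ Real.log 2 * (W+2) := by nlinarith
            _ = W * Real.log 2 + 2*Real.log 2 := by ring
            _ = x + 3*Real.log x + 2*Real.log 2 := by rw [hWl2]
        calc Real.log 2 * ((J:ℝ)*(1-σ)) = (Real.log 2 * (J:ℝ)) * (1-σ) := by ring
          _ ≤ (x + 3*Real.log x + 2*Real.log 2) * (1-σ) := by
              apply mul_le_mul_of_nonneg_right h1 h1σ0
      refine le_trans step ?_
      rw [h1σ]
      calc (x + 3*Real.log x + 2*Real.log 2) * ((1 - ε/2) * Real.log x / x)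
          = (1 - ε/2) * (Real.log x / x) * (x + 3*Real.log x + 2*Real.log 2) := by ring
        _ ≤ (1 - ε/2) * Real.log x + 1 := HB
        _ = 1 + (1-ε/2)*Real.log x := by ring
    have hJx : Real.log (J:ℝ) ≤ 1 + Real.log x := by
      have hJ2x : (J:ℝ) ≤ 2*x := by
        calc (J:ℝ) ≤ W + 2 := hJu
          _ ≤ 2*x := HC
      calc Real.log (J:ℝ) ≤ Real.log (2*x) := by
            apply Real.log_le_log (by positivity) hJ2x
        _ = Real.log 2 + Real.log x := Real.log_mul (by norm_num) (by linarith)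
        _ ≤ 1 + Real.log x := by linarith
    have hx1 : (0:ℝ) ≤ x ^ (1 - ε/2) := Real.rpow_nonneg hx0.le _
    have hlogJ0 : (0:ℝ) ≤ 1 + Real.log (J:ℝ) := by
      have h1J : (1:ℝ) ≤ (J:ℝ) := by exact_mod_cast (by omega : 1 ≤ J)
      have : (0:ℝ) ≤ Real.log (J:ℝ) := Real.log_nonneg h1J
      linarith
    calc 1 + 4 * (2:ℝ) ^ ((J:ℝ) * (1-σ)) * (1 + Real.log J)
        ≤ 1 + 4 * (Real.exp 1 * x ^ (1 - ε/2)) * (2 + Real.log x) := by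
          have h1 : (1:ℝ) + Real.log J ≤ 2 + Real.log x := by linarith
          have h2 : (0:ℝ) ≤ (2:ℝ) ^ ((J:ℝ) * (1-σ)) := (Real.rpow_pos_of_pos two_pos _).le
          refine add_le_add_right ?_ 1
          exact mul_le_mul (mul_le_mul_of_nonneg_left hJc (by norm_num)) h1 hlogJ0
            (by positivity)
      _ = 1 + 4 * Real.exp 1 * x ^ (1 - ε/2) * (2 + Real.log x) := by ring
  have hpart2 : ∑ p ∈ S.filter (fun p => ¬ p ≤ 2^J), ((p:ℝ)) ^ (-σ) ≤ 2 := by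
    have hconst : ∀ p ∈ S.filter (fun p => ¬ p ≤ 2^J), ((p:ℝ)) ^ (-σ)
        ≤ Real.exp (-((x + 3*Real.log x) * σ)) := by
      intro p hp
      simp only [mem_filter, not_le] at hp
      have hpe : Real.exp (x + 3*Real.log x) ≤ (p:ℝ) := by
        calc Real.exp (x + 3*Real.log x) ≤ (2:ℝ)^(J:ℝ) := h2Jlb
          _ = ((2^J : ℕ) : ℝ) := h2Jcast.symm
          _ ≤ (p:ℝ) := by exact_mod_cast hp.2.le
      calc ((p:ℝ)) ^ (-σ) ≤ (Real.exp (x + 3*Real.log x)) ^ (-σ) :=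
            rpow_anti (Real.exp_pos _) hpe (by linarith)
        _ = Real.exp (-((x + 3*Real.log x) * σ)) := by
            rw [← Real.exp_mul]
            ring_nf
    calc ∑ p ∈ S.filter (fun p => ¬ p ≤ 2^J), ((p:ℝ)) ^ (-σ)
        ≤ (S.filter (fun p => ¬ p ≤ 2^J)).card • Real.exp (-((x + 3*Real.log x) * σ)) :=
          Finset.sum_le_card_nsmul _ _ _ hconst
      _ = ((S.filter (fun p => ¬ p ≤ 2^J)).card : ℝ) * Real.exp (-((x + 3*Real.log x) * σ)) := by
          rw [nsmul_eq_mul]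
      _ ≤ (S.card : ℝ) * Real.exp (-((x + 3*Real.log x) * σ)) := by
          apply mul_le_mul_of_nonneg_right _ (Real.exp_pos _).le
          exact_mod_cast Finset.card_le_card (Finset.filter_subset _ _)
      _ ≤ (Real.exp x / Real.log 2) * Real.exp (-((x + 3*Real.log x) * σ)) := by
          apply mul_le_mul_of_nonneg_right _ (Real.exp_pos _).le
          rw [← le_div_iff₀ (by linarith)] at hk
          exact hk
      _ = (1 / Real.log 2) * Real.exp (x - (x + 3*Real.log x) * σ) := by
          rw [div_mul_eq_mul_div, ← Real.exp_add, div_eq_mul_one_div, mul_comm,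
            sub_eq_add_neg]
      _ ≤ (1 / Real.log 2) * 1 := by
          apply mul_le_mul_of_nonneg_left _ (by positivity)
          rw [← Real.exp_zero]
          apply Real.exp_le_exp.mpr
          have hexp : x - (x + 3*Real.log x) * σ = (1-σ)*x - 3*σ*Real.log x := by ring
          rw [hexp, h1σ]
          have e1 : (1 - ε/2) * Real.log x / x * x = (1 - ε/2) * Real.log x := by
            field_simp
          rw [e1]
          nlinarith
      _ ≤ 2 := by
          rw [mul_one, div_le_iff₀ (by linarith)]
          linarith
  linarith

lemma log_le_rpow_div {X r : ℝ} (hX : 1 ≤ X) (hr : 0 < r) :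
    Real.log X ≤ X ^ r / r := by
  have hX0 : (0:ℝ) < X := by linarith
  have h1 : Real.log (X ^ r) = r * Real.log X := Real.log_rpow hX0 r
  have h2 : Real.log (X ^ r) ≤ X ^ r := by
    have := Real.log_le_sub_one_of_pos (Real.rpow_pos_of_pos hX0 r)
    linarith
  rw [h1] at h2
  rw [le_div_iff₀ hr, mul_comm]
  exact h2

set_option maxHeartbeats 2000000 in
lemma conds (ε X : ℝ) (hε : 0 < ε) (hε1 : ε ≤ 1)
    (h1 : 3200 ≤ X) (h2 : 312/ε + 30 ≤ X) (h3 : (871/ε + 22) ^ ((4:ℝ)/ε) ≤ X) :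
    ((1 - ε/2) * Real.log X / X ≤ 1/2) ∧
    ((1 - ε/2) * (Real.log X / X) * (X + 3*Real.log X + 2*Real.log 2)
        ≤ (1 - ε/2) * Real.log X + 1) ∧
    ((X + 3*Real.log X)/Real.log 2 + 2 ≤ 2*X) ∧
    (3 + 4 * Real.exp 1 * X ^ (1 - ε/2) * (2 + Real.log X) ≤ 0.2*X) ∧
    (3.5 * Real.exp (0.7 * X) ≤ (ε/2) * Real.exp X * Real.log X / X) := by
  have hX0 : (0:ℝ) < X := by linarith
  have hX1 : (1:ℝ) ≤ X := by linarith
  set u := Real.log X with hu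
  have hu0 : (0:ℝ) ≤ u := Real.log_nonneg hX1
  have hu1 : (1:ℝ) ≤ u := by
    have h3' : Real.log (Real.exp 1) ≤ Real.log X :=
      Real.log_le_log (Real.exp_pos 1) (by
        have := Real.exp_one_lt_d9
        linarith)
    rwa [Real.log_exp] at h3'
  set s := X ^ ((2:ℝ)⁻¹) with hs
  set q := X ^ ((4:ℝ)⁻¹) with hq
  have hs0 : (0:ℝ) ≤ s := (Real.rpow_nonneg hX0.le _)
  have hq0 : (0:ℝ) ≤ q := (Real.rpow_nonneg hX0.le _)
  have hss : s * s = X := by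
    rw [hs, ← Real.rpow_add hX0]
    norm_num
  have hqq : q * q = s := by
    rw [hq, hs, ← Real.rpow_add hX0]
    norm_num
  have hs56 : 56 ≤ s := by nlinarith
  have hus : u ≤ 2 * s := by
    have h := log_le_rpow_div hX1 (show (0:ℝ) < 2⁻¹ by norm_num)
    rw [← hs, show s / (2:ℝ)⁻¹ = 2*s by ring] at h
    linarith
  have huq : u ≤ 4 * q := by
    have h := log_le_rpow_div hX1 (show (0:ℝ) < 4⁻¹ by norm_num)
    rw [← hq, show q / (4:ℝ)⁻¹ = 4*q by ring] at h
    linarith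
  have hl2a : (0.6931471803:ℝ) < Real.log 2 := Real.log_two_gt_d9
  have hl2b : Real.log 2 ≤ 1 := by
    have := Real.log_le_sub_one_of_pos (show (0:ℝ) < 2 by norm_num)
    linarith
  have hεh : (0:ℝ) ≤ 1 - ε/2 := by linarith
  have key52 : 3*u^2 + 2*Real.log 2*u ≤ X := by nlinarith
  refine ⟨?_, ?_, ?_, ?_, ?_⟩
  · -- E2
    rw [div_le_iff₀ hX0]
    nlinarith
  · -- HB
    have heq : (1 - ε/2) * (u / X) * (X + 3*u + 2*Real.log 2)
        = ((1 - ε/2) * u * (X + 3*u + 2*Real.log 2)) / X := by ring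
    rw [heq, div_le_iff₀ hX0]
    nlinarith
  · -- HC
    have h4 : (X + 3*u)/Real.log 2 ≤ 2*X - 2 := by
      rw [div_le_iff₀ (by linarith)]
      nlinarith
    linarith
  · -- HD
    set z := X ^ (ε/4) with hz
    set w := X ^ (ε/2) with hw
    set R := X ^ (1 - ε/2) with hR
    have hz0 : (0:ℝ) ≤ z := Real.rpow_nonneg hX0.le _
    have hw0 : (0:ℝ) ≤ w := Real.rpow_nonneg hX0.le _
    have hR0 : (0:ℝ) ≤ R := Real.rpow_nonneg hX0.le _
    have hzz : z * z = w := by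
      rw [hz, hw, ← Real.rpow_add hX0]
      ring_nf
    have hRw : R * w = X := by
      rw [hR, hw, ← Real.rpow_add hX0]
      norm_num
    have huz : u ≤ (4/ε) * z := by
      have := log_le_rpow_div hX1 (show (0:ℝ) < ε/4 by linarith)
      rw [← hz] at this
      calc u ≤ z / (ε/4) := this
        _ = (4/ε) * z := by
            rw [div_div_eq_mul_div, div_mul_eq_mul_div, mul_comm z 4]
    have hB0 : (0:ℝ) ≤ 871/ε + 22 := by positivity
    have hzB : 871/ε + 22 ≤ z := by
      have hmono : (871/ε + 22) ^ ((4:ℝ)/ε * (ε/4)) ≤ X ^ (ε/4) := by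
        rw [Real.rpow_mul hB0]
        exact Real.rpow_le_rpow (Real.rpow_nonneg hB0 _) h3 (by positivity)
      rwa [show (4:ℝ)/ε * (ε/4) = 1 by field_simp, Real.rpow_one] at hmono
    have he : Real.exp 1 < 2.7182818286 := Real.exp_one_lt_d9
    have he0 : (0:ℝ) < Real.exp 1 := Real.exp_pos 1
    have hz893 : 893 ≤ z := by
      have h871 : (871:ℝ) ≤ 871/ε := by
        rw [le_div_iff₀ hε]
        nlinarith
      linarith
    have hεz : (871:ℝ) ≤ z * ε := by
      calc (871:ℝ) = (871/ε)*ε := by field_simp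
        _ ≤ z*ε := mul_le_mul_of_nonneg_right (by linarith) hε.le
    have step : 4 * Real.exp 1 * (2 + u) ≤ 0.1 * w := by
      have hu4z : 4 * Real.exp 1 * (2 + u) ≤ 10.88 * 2 + 10.88 * ((4/ε) * z) := by
        have h1088 : 4 * Real.exp 1 ≤ 10.88 := by linarith
        nlinarith [huz, hu0, hz0, he0]
      have h2a : (10.88:ℝ) * 2 ≤ 0.05 * z^2 := by nlinarith
      have h2b : 10.88 * ((4/ε) * z) ≤ 0.05 * z^2 := by
        have heq : 10.88 * ((4/ε) * z) = (10.88 * 4 * z)/ε := by ring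
        rw [heq, div_le_iff₀ hε]
        nlinarith [mul_le_mul_of_nonneg_left hεz hz0]
      have hzw : z^2 = w := by rw [← hzz]; ring
      nlinarith
    have main : 4 * Real.exp 1 * R * (2 + u) ≤ 0.1 * X := by
      calc 4 * Real.exp 1 * R * (2 + u) = R * (4 * Real.exp 1 * (2 + u)) := by ring
        _ ≤ R * (0.1 * w) := by
            apply mul_le_mul_of_nonneg_left step hR0
        _ = 0.1 * X := by rw [← hRw]; ring
    have h30 : (3:ℝ) ≤ 0.1 * X := by linarith
    calc 3 + 4 * Real.exp 1 * R * (2 + u) ≤ 0.1*X + 0.1*X := by linarith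
      _ = 0.2 * X := by ring
  · -- HE
    set A := Real.exp (0.7 * X) with hA
    set C := Real.exp (0.3 * X) with hC
    have hA0 : (0:ℝ) < A := Real.exp_pos _
    have hC0 : (0:ℝ) < C := Real.exp_pos _
    have hAC : A * C = Real.exp X := by
      rw [hA, hC, ← Real.exp_add]
      ring_nf
    have hCq : 0.0225 * X^2 ≤ C := by
      have h15 : 1 + 0.15*X ≤ Real.exp (0.15*X) := by
        have := Real.add_one_le_exp (0.15*X)
        linarith
      have hsq : Real.exp (0.15*X) * Real.exp (0.15*X) = C := by
        rw [hC, ← Real.exp_add]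
        ring_nf
      nlinarith [Real.exp_pos (0.15*X)]
    have hgoal : 3.5 * A * X ≤ (ε/2) * Real.exp X * u := by
      have hCu : 0.0225 * X^2 ≤ C * u := by nlinarith
      have hεX : (312:ℝ) ≤ X * ε := by
        calc (312:ℝ) = (312/ε)*ε := by field_simp
          _ ≤ X*ε := mul_le_mul_of_nonneg_right (by linarith) hε.le
      have hinner : 3.5 * X ≤ (ε/2) * (0.0225 * X^2) := by
        nlinarith [mul_le_mul_of_nonneg_left hεX hX0.le]
      calc 3.5 * A * X = A * (3.5 * X) := by ring
        _ ≤ A * ((ε/2) * (0.0225 * X^2)) := mul_le_mul_of_nonneg_left hinner hA0.le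
        _ = ((ε/2) * A) * (0.0225 * X^2) := by ring
        _ ≤ ((ε/2) * A) * (C * u) := mul_le_mul_of_nonneg_left hCu (by positivity)
        _ = (ε/2) * Real.exp X * u := by rw [← hAC]; ring
    rw [show (ε/2) * Real.exp X * Real.log X / X = ((ε/2) * Real.exp X * Real.log X) / X by ring,
      le_div_iff₀ hX0]
    linarith [hgoal]

lemma rad_dvd_rad {a b : ℕ} (hb : b ≠ 0) (h : a ∣ b) : rad a ∣ rad b :=
  Finset.prod_dvd_prod_of_subset _ _ _ (Nat.primeFactors_mono h hb)

lemma rad_le {m : ℕ} (hm : 1 ≤ m) : rad m ≤ m :=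
  Nat.le_of_dvd hm (Nat.prod_primeFactors_dvd m)

lemma primeFactors_subset_of_rad_dvd {m c : ℕ} (hc : c ≠ 0) (h : rad m ∣ c) :
    m.primeFactors ⊆ c.primeFactors := by
  intro p hp
  have hpp : p.Prime := Nat.prime_of_mem_primeFactors hp
  have hdvd : p ∣ rad m := Finset.dvd_prod_of_mem _ hp
  exact Nat.mem_primeFactors.mpr ⟨hpp, hdvd.trans h, hc⟩

set_option maxHeartbeats 1600000 in
lemma main_count (t : ℝ) (ε : ℝ) (c : ℕ) (hc : 0 < c) (ht : 16 ≤ t)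
    (hε : 0 < ε) (hε1 : ε ≤ 1)
    (hx3 : 3 ≤ Real.log (Real.log t))
    (E2 : (1 - ε/2) * Real.log (Real.log (Real.log t)) / Real.log (Real.log t) ≤ 1/2)
    (HB : (1 - ε/2) * (Real.log (Real.log (Real.log t)) / Real.log (Real.log t)) *
        (Real.log (Real.log t) + 3*Real.log (Real.log (Real.log t)) + 2*Real.log 2)
        ≤ (1 - ε/2) * Real.log (Real.log (Real.log t)) + 1)
    (HC : (Real.log (Real.log t) + 3*Real.log (Real.log (Real.log t)))/Real.log 2 + 2
        ≤ 2*Real.log (Real.log t))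
    (HD : 3 + 4 * Real.exp 1 * (Real.log (Real.log t)) ^ (1 - ε/2) *
        (2 + Real.log (Real.log (Real.log t))) ≤ 0.2*Real.log (Real.log t))
    (HE : 3.5 * Real.exp (0.7 * Real.log (Real.log t))
        ≤ (ε/2) * Real.log t * Real.log (Real.log (Real.log t)) / Real.log (Real.log t)) :
    ((((Finset.Icc 1 ⌊t⌋₊).filter (fun d => rad d.totient = c)).card : ℝ))
      ≤ t * (L t) ^ (-(1 - ε)) := by
  have ht0 : (0:ℝ) < t := by linarith
  have hy1 : (1:ℝ) < Real.log t := by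
    have : Real.log 16 ≤ Real.log t := Real.log_le_log (by norm_num) ht
    have h16 : (2:ℝ) ≤ Real.log 16 := by
      rw [show (16:ℝ) = 2^4 by norm_num, Real.log_pow]
      have := Real.log_two_gt_d9
      push_cast
      linarith
    linarith
  have hy0 : (0:ℝ) < Real.log t := by linarith
  set y : ℝ := Real.log t with hydef
  set x : ℝ := Real.log y with hxdef
  set ℓ : ℝ := Real.log x with hldef
  have hx0 : (0:ℝ) < x := by linarith
  have hl0 : (0:ℝ) < ℓ := by
    have := Real.log_lt_log two_pos (by linarith : (2:ℝ) < x)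
    have h2 := Real.log_two_gt_d9
    linarith
  have hexpx : Real.exp x = y := Real.exp_log hy0
  set σ : ℝ := 1 - (1 - ε/2) * ℓ / x with hσdef
  have hσl : 1/2 ≤ σ := by
    rw [hσdef]
    have : (1 - ε/2) * ℓ / x ≤ 1/2 := E2
    linarith
  have hσu : σ ≤ 1 := by
    rw [hσdef]
    have h1 : (0:ℝ) ≤ 1 - ε/2 := by linarith
    have : 0 ≤ (1 - ε/2) * ℓ / x := div_nonneg (mul_nonneg h1 hl0.le) hx0.le
    linarith
  have hσ0 : (0:ℝ) < σ := lt_of_lt_of_le (by norm_num) hσl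
  set N := ⌊t⌋₊ with hNdef
  have hNt : (N:ℝ) ≤ t := Nat.floor_le ht0.le
  have hN16 : 16 ≤ N := Nat.le_floor (by exact_mod_cast ht)
  set D := (Finset.Icc 1 N).filter (fun d => rad d.totient = c) with hDdef
  by_cases hD : D = ∅
  · rw [hD]
    simp only [Finset.card_empty, Nat.cast_zero]
    have hL : 0 < L t := by unfold L; exact Real.exp_pos _
    exact mul_nonneg ht0.le (Real.rpow_nonneg hL.le _)
  -- D nonempty: c ≤ N
  obtain ⟨d₀, hd₀⟩ := Finset.nonempty_of_ne_empty hD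
  have hd₀' := Finset.mem_filter.mp hd₀
  have hd₀Icc := Finset.mem_Icc.mp hd₀'.1
  have hcN : c ≤ N := by
    have h1 : 1 ≤ d₀.totient := Nat.totient_pos.mpr (by omega)
    have h2 : rad d₀.totient ≤ d₀.totient := rad_le h1
    have h3 : d₀.totient ≤ d₀ := Nat.totient_le d₀
    have h4 : c = rad d₀.totient := hd₀'.2.symm
    omega
  have hcne : c ≠ 0 := by omega
  set S := c.primeFactors with hSdef
  have hSprime : ∀ p ∈ S, p.Prime := fun p hp => Nat.prime_of_mem_primeFactors hp
  have hkS : (S.card : ℝ) * Real.log 2 ≤ Real.exp x := by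
    have h2k : (2:ℕ)^S.card ≤ c := by
      calc (2:ℕ)^S.card = ∏ _p ∈ S, 2 := by rw [Finset.prod_const]
        _ ≤ ∏ p ∈ S, p := Finset.prod_le_prod' (fun p hp => (hSprime p hp).two_le)
        _ ≤ c := Nat.le_of_dvd (by omega) (Nat.prod_primeFactors_dvd c)
    have hcast : ((2:ℝ))^S.card ≤ t := by
      have : ((2^S.card : ℕ) : ℝ) ≤ t := by
        calc ((2^S.card:ℕ) : ℝ) ≤ (c:ℝ) := by exact_mod_cast h2k
          _ ≤ (N:ℝ) := by exact_mod_cast hcN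
          _ ≤ t := hNt
      push_cast at this
      exact this
    have hlog := Real.log_le_log (by positivity) hcast
    rw [Real.log_pow] at hlog
    rw [hexpx]
    exact hlog
  set Q := (Finset.Icc 1 N).filter (fun q => q.Prime ∧ rad (q-1) ∣ c) with hQdef
  have hQprime : ∀ q ∈ Q, q.Prime := fun q hq => (Finset.mem_filter.mp hq).2.1
  have claim1 : ∀ d ∈ D, d.primeFactors ⊆ Q := by
    intro d hd q hq
    have hd' := Finset.mem_filter.mp hd
    have hdIcc := Finset.mem_Icc.mp hd'.1
    have hq' := Nat.mem_primeFactors.mp hq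
    obtain ⟨hqp, hqd, _⟩ := hq'
    have hd0 : d ≠ 0 := by omega
    have hqN : q ≤ N := le_trans (Nat.le_of_dvd (by omega) hqd) hdIcc.2
    have htd : q.totient ∣ d.totient := Nat.totient_dvd_of_dvd hqd
    have htq : q.totient = q - 1 := Nat.totient_prime hqp
    have hraddvd : rad (q-1) ∣ c := by
      rw [← hd'.2]
      rw [← htq]
      exact rad_dvd_rad (by
        have := Nat.totient_pos.mpr (show 0 < d by omega)
        omega) htd
    exact Finset.mem_filter.mpr ⟨Finset.mem_Icc.mpr ⟨hqp.pos, hqN⟩, hqp, hraddvd⟩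
  -- Rankin step
  have hnn : ∀ m : ℕ, (0:ℝ) ≤ ((m:ℝ)) ^ (-σ) := fun m => Real.rpow_nonneg (Nat.cast_nonneg m) _
  have step1 : ((D.card : ℕ) : ℝ) ≤ t ^ σ * ∑ d ∈ D, ((d:ℝ)) ^ (-σ) := by
    rw [Finset.mul_sum]
    calc ((D.card : ℕ) : ℝ) = ∑ _d ∈ D, (1:ℝ) := by rw [Finset.sum_const, nsmul_eq_mul, mul_one]
      _ ≤ ∑ d ∈ D, t ^ σ * ((d:ℝ)) ^ (-σ) := by
          refine Finset.sum_le_sum (fun d hd => ?_)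
          have hdIcc := Finset.mem_Icc.mp (Finset.mem_filter.mp hd).1
          have hd1 : (1:ℝ) ≤ (d:ℝ) := by exact_mod_cast hdIcc.1
          have hdt : (d:ℝ) ≤ t := le_trans (by exact_mod_cast hdIcc.2) hNt
          have h1 : t ^ σ * ((d:ℝ)) ^ (-σ) = (t/(d:ℝ)) ^ σ := by
            rw [Real.div_rpow ht0.le (by linarith), Real.rpow_neg (by linarith)]
            rw [div_eq_mul_inv]
          rw [h1]
          have h2 : (1:ℝ) ≤ t/(d:ℝ) := by
            rw [le_div_iff₀ (by linarith)]
            linarith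
          calc (1:ℝ) = (t/(d:ℝ)) ^ (0:ℝ) := (Real.rpow_zero _).symm
            _ ≤ (t/(d:ℝ)) ^ σ := Real.rpow_le_rpow_of_exponent_le h2 hσ0.le
  have step2 : ∑ d ∈ D, ((d:ℝ)) ^ (-σ)
      ≤ ∑ m ∈ (Finset.Icc 1 N).filter (fun m => m.primeFactors ⊆ Q), ((m:ℝ)) ^ (-σ) := by
    refine Finset.sum_le_sum_of_subset_of_nonneg (fun d hd => ?_) (fun m _ _ => hnn m)
    exact Finset.mem_filter.mpr ⟨(Finset.mem_filter.mp hd).1, claim1 d hd⟩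
  have step3 := key1 N hσ0 Q hQprime
  have step4 := prod_le_exp_sum Q hQprime hσl
  set MM := (Finset.Icc 1 N).filter (fun m => m.primeFactors ⊆ S) with hMMdef
  have step5 : ∑ q ∈ Q, ((q:ℝ)) ^ (-σ) ≤ ∑ m ∈ MM, ((m:ℝ)) ^ (-σ) := by
    set g : ℕ → ℝ := fun m => ((m:ℝ)) ^ (-σ) with hgdef
    have hpt : ∀ q ∈ Q, ((q:ℝ)) ^ (-σ) ≤ g (q-1) := by
      intro q hq
      have hqp := hQprime q hq
      have hq2 : 2 ≤ q := hqp.two_le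
      have h1 : (0:ℝ) < ((q-1:ℕ):ℝ) := by
        have : 1 ≤ q - 1 := by omega
        exact_mod_cast this
      refine rpow_anti h1 ?_ hσ0.le
      exact_mod_cast Nat.sub_le q 1

    have hinj : Set.InjOn (fun q => q - 1) ↑Q := by
      intro a ha b hb hab
      have ha2 := (hQprime a ha).two_le
      have hb2 := (hQprime b hb).two_le
      simp only at hab
      omega
    calc ∑ q ∈ Q, ((q:ℝ)) ^ (-σ) ≤ ∑ q ∈ Q, g (q-1) :=
          Finset.sum_le_sum hpt
      _ = ∑ m ∈ Q.image (fun q => q - 1), g m :=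
          (Finset.sum_image (fun a ha b hb h => hinj ha hb h)).symm
      _ ≤ ∑ m ∈ MM, g m := by
          refine Finset.sum_le_sum_of_subset_of_nonneg (fun m hm => ?_) (fun m _ _ => hnn m)
          obtain ⟨q, hq, rfl⟩ := Finset.mem_image.mp hm
          have hq' := Finset.mem_filter.mp hq
          have hqIcc := Finset.mem_Icc.mp hq'.1
          have hq2 := hq'.2.1.two_le
          refine Finset.mem_filter.mpr ⟨Finset.mem_Icc.mpr ⟨by omega, by omega⟩, ?_⟩
          exact primeFactors_subset_of_rad_dvd hcne hq'.2.2
  have step6 := key1 N hσ0 S hSprime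
  have step7 := prod_le_exp_sum S hSprime hσl
  have step8 : ∑ p ∈ S, ((p:ℝ)) ^ (-σ) ≤ 0.2 * x :=
    sum_S_le S hSprime x ε σ hx3 hε hε1 (by rw [hσdef, hldef]) hσl hkS
      (by rw [← hldef]; exact HB) (by rw [← hldef]; exact HC) (by rw [← hldef]; exact HD)
  have hQsum : ∑ q ∈ Q, ((q:ℝ)) ^ (-σ) ≤ Real.exp (0.7 * x) := by
    refine le_trans step5 (le_trans step6 (le_trans step7 ?_))
    apply Real.exp_le_exp.mpr
    linarith
  have hDsum : ∑ d ∈ D, ((d:ℝ)) ^ (-σ) ≤ Real.exp (3.5 * Real.exp (0.7 * x)) := by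
    refine le_trans step2 (le_trans step3 (le_trans step4 ?_))
    apply Real.exp_le_exp.mpr
    linarith
  -- final comparison
  have hfin : y*σ + 3.5 * Real.exp (0.7*x) ≤ y - (1-ε)*(y*(ℓ/x)) := by
    have h1 : y - y*σ - (1-ε)*(y*(ℓ/x)) = (ε/2)*y*ℓ/x := by
      rw [hσdef]
      field_simp
      ring
    linarith [HE]
  have hLt : L t = Real.exp (y * (ℓ/x)) := by
    unfold L
    rfl
  calc ((D.card : ℕ) : ℝ) ≤ t ^ σ * ∑ d ∈ D, ((d:ℝ)) ^ (-σ) := step1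
    _ ≤ t ^ σ * Real.exp (3.5 * Real.exp (0.7 * x)) := by
        refine mul_le_mul_of_nonneg_left hDsum (Real.rpow_nonneg ht0.le _)
    _ = Real.exp (y*σ + 3.5 * Real.exp (0.7 * x)) := by
        rw [Real.exp_add, Real.rpow_def_of_pos ht0, mul_comm (Real.log t) σ]
    _ ≤ Real.exp (y - (1-ε)*(y*(ℓ/x))) := Real.exp_le_exp.mpr hfin
    _ = t * (L t) ^ (-(1-ε)) := by
        rw [Real.exp_sub, hLt, ← Real.exp_mul,
          show (y*(ℓ/x)) * (-(1-ε)) = -((1-ε)*(y*(ℓ/x))) by ring,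
          Real.exp_neg, show Real.exp y = t from Real.exp_log ht0, div_eq_mul_inv]

end RadFiber

theorem rad_totient_fiber_count_uniform :
    ∀ ε : ℝ, 0 < ε → ∃ t₀ : ℝ, ∀ t : ℝ, t₀ ≤ t → ∀ c : ℕ, 0 < c →
      ((((Finset.Icc 1 ⌊t⌋₊).filter (fun d => rad d.totient = c)).card : ℝ))
        ≤ t * (L t) ^ (-(1 - ε)) := by
  intro ε hε
  set ε' := min ε 1 with hε'def
  have hε'0 : 0 < ε' := lt_min hε one_pos
  have hε'1 : ε' ≤ 1 := min_le_right _ _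
  have hε'ε : ε' ≤ ε := min_le_left _ _
  set X₀ : ℝ := max 3200 (max (312/ε' + 30) ((871/ε' + 22) ^ ((4:ℝ)/ε'))) with hX₀def
  refine ⟨Real.exp (Real.exp X₀) + 16, ?_⟩
  intro t ht c hc
  have hexppos : (0:ℝ) < Real.exp (Real.exp X₀) := Real.exp_pos _
  have ht16 : 16 ≤ t := by linarith
  have ht0 : (0:ℝ) < t := by linarith
  have hy : Real.exp X₀ ≤ Real.log t := by
    have h1 : Real.exp (Real.exp X₀) ≤ t := by linarith
    calc Real.exp X₀ = Real.log (Real.exp (Real.exp X₀)) := (Real.log_exp _).symm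
      _ ≤ Real.log t := Real.log_le_log (Real.exp_pos _) h1
  have hx : X₀ ≤ Real.log (Real.log t) := by
    calc X₀ = Real.log (Real.exp X₀) := (Real.log_exp _).symm
      _ ≤ Real.log (Real.log t) := Real.log_le_log (Real.exp_pos _) hy
  set x := Real.log (Real.log t) with hxdef
  have hc1 : 3200 ≤ x := le_trans (le_max_left _ _) hx
  have hc2 : 312/ε' + 30 ≤ x :=
    le_trans (le_trans (le_max_left _ _) (le_max_right 3200 _)) hx
  have hc3 : (871/ε' + 22) ^ ((4:ℝ)/ε') ≤ x :=
    le_trans (le_trans (le_max_right _ _) (le_max_right 3200 _)) hx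
  obtain ⟨E2, HB, HC, HD, HE'⟩ := RadFiber.conds ε' x hε'0 hε'1 hc1 hc2 hc3
  have hy0 : (0:ℝ) < Real.log t := lt_of_lt_of_le (Real.exp_pos X₀) hy
  have hexpx : Real.exp x = Real.log t := Real.exp_log hy0
  have HE : 3.5 * Real.exp (0.7 * x)
      ≤ (ε'/2) * Real.log t * Real.log x / x := by
    rw [← hexpx]
    exact HE'
  have main := RadFiber.main_count t ε' c hc ht16 hε'0 hε'1 (by linarith : 3 ≤ x) E2 HB HC HD HE
  refine le_trans main ?_
  have hL1 : 1 ≤ L t := by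
    unfold L
    rw [show (1:ℝ) = Real.exp 0 from (Real.exp_zero).symm]
    apply Real.exp_le_exp.mpr
    have hlx : (0:ℝ) ≤ Real.log x := Real.log_nonneg (by linarith)
    have hx0 : (0:ℝ) < x := by linarith
    exact mul_nonneg hy0.le (div_nonneg hlx hx0.le)
  refine mul_le_mul_of_nonneg_left ?_ ht0.le
  exact Real.rpow_le_rpow_of_exponent_le hL1 (by linarith : -(1-ε') ≤ -(1-ε))
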